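/- arXiv:0804.3074 — 2 statements merged into one kernel-verified Lean document; each statement's English description precedes it below -/
import Mathlib

section
/- For n ≥ k ≥ 0 and m ≥ 1, the hook principal specialization factors as S_{(m,1^k)}(1,t,...,t^n) = [n+m choose n-k]_{q,t} · φ^{n-k}( ∏_{i=1}^{k} (t^{q^{m+k}} - t^{q^i})/(t^{q^i} - t) ), where φ is t ↦ t^q. In particular S_{(m,1^k)}(1,t,...,t^n) = [n+m choose n-k]_{q,t} · φ^{n-k}(S_{(m,1^k)}(1,t,...,t^k)). -/
noncomputable section

/-- The principal specialization `S_λ(1, t, …, t^{N-1})` via the Vandermonde product. -/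
def Sspec (q N : ℕ) (lam : ℕ → ℕ) (t : RatFunc ℚ) : RatFunc ℚ :=
  ∏ j ∈ Finset.range N, ∏ i ∈ Finset.range j,
    (t ^ q ^ (lam (N - j) + j) - t ^ q ^ (lam (N - i) + i)) / (t ^ q ^ j - t ^ q ^ i)

/-- The hook partition `(m, 1^k)`, as a 1-indexed sequence of parts. -/
def hookLam (m k : ℕ) : ℕ → ℕ := fun i => if i = 1 then m else if i ≤ k + 1 then 1 else 0

/-- The (q,t)-binomial `[N choose k]_{q,t}` in product form, as a function of `t`. -/
def qtbin (q N k : ℕ) (t : RatFunc ℚ) : RatFunc ℚ :=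
  ∏ i ∈ Finset.range k, (1 - t ^ (q ^ N - q ^ i)) / (1 - t ^ (q ^ k - q ^ i))

namespace HookAux

open Finset

lemma ratX_pow_inj {u v : ℕ} (h : (RatFunc.X : RatFunc ℚ) ^ u = RatFunc.X ^ v) : u = v := by
  have h2 : (algebraMap (Polynomial ℚ) (RatFunc ℚ)) (Polynomial.X ^ u)
      = (algebraMap (Polynomial ℚ) (RatFunc ℚ)) (Polynomial.X ^ v) := by
    simpa [map_pow, RatFunc.algebraMap_X] using h
  have h3 := IsFractionRing.injective (Polynomial ℚ) (RatFunc ℚ) h2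
  have h4 := congrArg Polynomial.natDegree h3
  simpa using h4

lemma hu_Xc (q c : ℕ) (hq : 2 ≤ q) :
    ∀ a b : ℕ, a ≠ b →
      ((RatFunc.X : RatFunc ℚ) ^ q ^ c) ^ q ^ a - (RatFunc.X ^ q ^ c) ^ q ^ b ≠ 0 := by
  intro a b hab
  rw [sub_ne_zero, ← pow_mul, ← pow_mul, ← pow_add, ← pow_add]
  intro h
  have := Nat.pow_right_injective hq (ratX_pow_inj h)
  omega

lemma hu_X (q : ℕ) (hq : 2 ≤ q) :
    ∀ a b : ℕ, a ≠ b →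
      (RatFunc.X : RatFunc ℚ) ^ q ^ a - RatFunc.X ^ q ^ b ≠ 0 := by
  have := hu_Xc q 0 hq
  simpa [pow_zero, pow_one] using this

lemma telescope_Ico {K : Type*} [Field K] {g : ℕ → K} {a b : ℕ} (hab : a ≤ b)
    (hg : ∀ j, a ≤ j → j ≤ b → g j ≠ 0) :
    ∏ j ∈ Ico a b, (g (j + 1) / g j) = g b / g a := by
  induction b, hab using Nat.le_induction with
  | base => rw [Finset.Ico_self, prod_empty, div_self (hg a le_rfl le_rfl)]
  | succ b hab ih =>
    rw [Finset.prod_Ico_succ_top (by omega), ih (fun j h1 h2 => hg j h1 (by omega))]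
    have h1 := hg a le_rfl (by omega)
    have h2 := hg b hab (by omega)
    field_simp

/-- The exponent sequence of the hook Vandermonde specialization. -/
def hE (M d n j : ℕ) : ℕ := if j < d then j else if j < n then j + 1 else M

lemma core {K : Type*} [Field K] (u : ℕ → K)
    (hu : ∀ a b : ℕ, a ≠ b → u a - u b ≠ 0) (M d k : ℕ) (_hM : d + k < M) :
    ∏ j ∈ range (d + k + 1), ∏ i ∈ range j,
        (u (hE M d (d + k) j) - u (hE M d (d + k) i)) / (u j - u i)
      = (∏ i ∈ range d, (u M - u i) / (u d - u i)) *
        ∏ i ∈ Ico d (d + k), (u M - u (i + 1)) / (u (i + 1) - u d) := by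
  have hEn : hE M d (d + k) (d + k) = M := by simp only [hE]; split_ifs <;> omega
  have hElt : ∀ j, j < d → hE M d (d + k) j = j := by
    intro j hj; simp only [hE]; split_ifs <;> omega
  have hEmid : ∀ j, d ≤ j → j < d + k → hE M d (d + k) j = j + 1 := by
    intro j h1 h2; simp only [hE]; split_ifs <;> omega
  have hsplit : ∀ F : ℕ → K, ∏ j ∈ range (d + k), F j
      = (∏ j ∈ range d, F j) * ∏ j ∈ Ico d (d + k), F j := by
    intro F
    rw [range_eq_Ico, ← prod_Ico_consecutive _ (Nat.zero_le d) (by omega : d ≤ d + k),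
      ← range_eq_Ico]
  rw [prod_range_succ, hsplit]
  -- part 1 : j < d  gives 1
  have part1 : ∏ j ∈ range d, ∏ i ∈ range j,
      (u (hE M d (d + k) j) - u (hE M d (d + k) i)) / (u j - u i) = 1 := by
    apply prod_eq_one; intro j hj
    apply prod_eq_one; intro i hi
    rw [mem_range] at hj; rw [mem_range] at hi
    rw [hElt j hj, hElt i (by omega)]
    exact div_self (hu j i (by omega))
  -- part 2 : d ≤ j < d + k
  have part2 : ∏ j ∈ Ico d (d + k), ∏ i ∈ range j,
      (u (hE M d (d + k) j) - u (hE M d (d + k) i)) / (u j - u i)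
      = ((∏ i ∈ range d, (u (d + k) - u i)) / ∏ i ∈ range d, (u d - u i)) *
        ((∏ i ∈ Ico d (d + k), (u (d + k) - u i)) /
          ∏ i ∈ Ico d (d + k), (u (i + 1) - u d)) := by
    have hterm : ∀ j ∈ Ico d (d + k),
        ∏ i ∈ range j, (u (hE M d (d + k) j) - u (hE M d (d + k) i)) / (u j - u i)
        = (∏ i ∈ range d, ((u (j + 1) - u i) / (u j - u i))) *
          (((∏ i ∈ Ico d (j + 1), (u (j + 1) - u i)) / (u (j + 1) - u d)) /
            ∏ i ∈ Ico d j, (u j - u i)) := by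
      intro j hj
      rw [mem_Ico] at hj
      rw [range_eq_Ico, ← prod_Ico_consecutive _ (Nat.zero_le d) hj.1, ← range_eq_Ico]
      congr 1
      · exact prod_congr rfl fun i hi => by
          rw [mem_range] at hi
          rw [hEmid j hj.1 hj.2, hElt i hi]
      · -- middle block
        have h1 : ∏ i ∈ Ico d j, (u (hE M d (d + k) j) - u (hE M d (d + k) i)) / (u j - u i)
            = ∏ i ∈ Ico d j, (u (j + 1) - u (i + 1)) / (u j - u i) := by
          refine prod_congr rfl fun i hi => ?_
          rw [mem_Ico] at hi
          rw [hEmid j hj.1 hj.2, hEmid i hi.1 (by omega)]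
        rw [h1, prod_div_distrib]
        congr 1
        have h2 : ∏ i ∈ Ico d j, (u (j + 1) - u (i + 1))
            = ∏ i ∈ Ico (d + 1) (j + 1), (u (j + 1) - u i) := by
          rw [prod_Ico_eq_prod_range, prod_Ico_eq_prod_range,
            (by omega : j + 1 - (d + 1) = j - d)]
          exact prod_congr rfl fun i _ => by rw [(by omega : d + 1 + i = d + i + 1)]
        rw [h2, prod_eq_prod_Ico_succ_bot (by omega : d < j + 1)]
        rw [mul_comm, mul_div_assoc, div_self (hu (j + 1) d (by omega)), mul_one]
    rw [prod_congr rfl hterm, prod_mul_distrib]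
    congr 1
    · -- first part: swap and telescope
      rw [prod_comm]
      rw [← prod_div_distrib]
      refine prod_congr rfl fun i hi => ?_
      rw [mem_range] at hi
      exact telescope_Ico (by omega)
        (fun j h1 h2 => hu j i (by omega))
    · -- second part: telescope on G
      have : ∀ j ∈ Ico d (d + k),
          ((∏ i ∈ Ico d (j + 1), (u (j + 1) - u i)) / (u (j + 1) - u d)) /
            (∏ i ∈ Ico d j, (u j - u i))
          = ((fun j => ∏ i ∈ Ico d j, (u j - u i)) (j + 1) /
              (fun j => ∏ i ∈ Ico d j, (u j - u i)) j) * (u (j + 1) - u d)⁻¹ := by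
        intro j hj
        simp only
        rw [div_div, mul_comm (u (j + 1) - u d), ← div_div, div_eq_mul_inv]
      rw [prod_congr rfl this, prod_mul_distrib, prod_inv_distrib]
      have htel := telescope_Ico (K := K) (g := fun j => ∏ i ∈ Ico d j, (u j - u i))
        (by omega : d ≤ d + k)
        (fun j h1 h2 => prod_ne_zero_iff.mpr fun i hi =>
          hu j i (by rw [mem_Ico] at hi; omega))
      rw [htel]
      simp [div_eq_mul_inv]
  -- part 3 : j = n
  have part3 : ∏ i ∈ range (d + k),
      (u (hE M d (d + k) (d + k)) - u (hE M d (d + k) i)) / (u (d + k) - u i)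
      = ((∏ i ∈ range d, (u M - u i)) / ∏ i ∈ range d, (u (d + k) - u i)) *
        ((∏ i ∈ Ico d (d + k), (u M - u (i + 1))) /
          ∏ i ∈ Ico d (d + k), (u (d + k) - u i)) := by
    rw [hsplit]
    congr 1
    · rw [← prod_div_distrib]
      refine prod_congr rfl fun i hi => ?_
      rw [mem_range] at hi
      rw [hEn, hElt i hi]
    · rw [← prod_div_distrib]
      refine prod_congr rfl fun i hi => ?_
      rw [mem_Ico] at hi
      rw [hEn, hEmid i hi.1 hi.2]
  rw [part1, part2, part3, one_mul]
  -- final algebra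
  rw [prod_div_distrib, prod_div_distrib]
  have hA2 : (∏ i ∈ range d, (u d - u i)) ≠ 0 :=
    prod_ne_zero_iff.mpr fun i hi => hu d i (by rw [mem_range] at hi; omega)
  have hA3 : (∏ i ∈ range d, (u (d + k) - u i)) ≠ 0 :=
    prod_ne_zero_iff.mpr fun i hi => hu (d + k) i (by rw [mem_range] at hi; omega)
  have hGn : (∏ i ∈ Ico d (d + k), (u (d + k) - u i)) ≠ 0 :=
    prod_ne_zero_iff.mpr fun i hi => hu (d + k) i (by rw [mem_Ico] at hi; omega)
  have hPD : (∏ i ∈ Ico d (d + k), (u (i + 1) - u d)) ≠ 0 :=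
    prod_ne_zero_iff.mpr fun i hi => hu (i + 1) d (by rw [mem_Ico] at hi; omega)
  field_simp

lemma Sspec_hook (q m d k M : ℕ) (hm : 1 ≤ m) (hM : M = m + d + k) (s : RatFunc ℚ)
    (hu : ∀ a b : ℕ, a ≠ b → s ^ q ^ a - s ^ q ^ b ≠ 0) :
    Sspec q (d + k + 1) (hookLam m k) s
      = (∏ i ∈ range d, (s ^ q ^ M - s ^ q ^ i) / (s ^ q ^ d - s ^ q ^ i)) *
        ∏ i ∈ Ico d (d + k), (s ^ q ^ M - s ^ q ^ (i + 1)) / (s ^ q ^ (i + 1) - s ^ q ^ d) := by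
  have he : ∀ j ≤ d + k, hookLam m k (d + k + 1 - j) + j = hE M d (d + k) j := by
    intro j hj
    simp only [hookLam, hE]
    split_ifs <;> omega
  rw [Sspec]
  have step1 : ∏ j ∈ range (d + k + 1), ∏ i ∈ range j,
      (s ^ q ^ (hookLam m k (d + k + 1 - j) + j) - s ^ q ^ (hookLam m k (d + k + 1 - i) + i)) /
        (s ^ q ^ j - s ^ q ^ i)
      = ∏ j ∈ range (d + k + 1), ∏ i ∈ range j,
        (s ^ q ^ (hE M d (d + k) j) - s ^ q ^ (hE M d (d + k) i)) / (s ^ q ^ j - s ^ q ^ i) := by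
    refine prod_congr rfl fun j hj => prod_congr rfl fun i hi => ?_
    rw [mem_range] at hj; rw [mem_range] at hi
    rw [he j (by omega), he i (by omega)]
  rw [step1]
  exact core (fun a => s ^ q ^ a) hu M d k (by omega)

lemma qtbin_eq (q N d : ℕ) (hq : 2 ≤ q) (hdN : d ≤ N) :
    qtbin q N d RatFunc.X
      = ∏ i ∈ range d, ((RatFunc.X : RatFunc ℚ) ^ q ^ N - RatFunc.X ^ q ^ i) /
          (RatFunc.X ^ q ^ d - RatFunc.X ^ q ^ i) := by
  rw [qtbin]
  refine prod_congr rfl fun i hi => ?_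
  rw [mem_range] at hi
  have hXi : (RatFunc.X : RatFunc ℚ) ^ q ^ i ≠ 0 := pow_ne_zero _ RatFunc.X_ne_zero
  have hN : (RatFunc.X : RatFunc ℚ) ^ (q ^ N - q ^ i)
      = RatFunc.X ^ q ^ N / RatFunc.X ^ q ^ i := by
    rw [eq_div_iff hXi, ← pow_add]
    congr 1
    have : q ^ i ≤ q ^ N := Nat.pow_le_pow_right (by omega) (by omega)
    omega
  have hD : (RatFunc.X : RatFunc ℚ) ^ (q ^ d - q ^ i)
      = RatFunc.X ^ q ^ d / RatFunc.X ^ q ^ i := by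
    rw [eq_div_iff hXi, ← pow_add]
    congr 1
    have : q ^ i ≤ q ^ d := Nat.pow_le_pow_right (by omega) (by omega)
    omega
  have h1 : (RatFunc.X : RatFunc ℚ) ^ q ^ d - RatFunc.X ^ q ^ i ≠ 0 :=
    hu_X q hq d i (by omega)
  have hne1 : (1 : RatFunc ℚ) - RatFunc.X ^ q ^ d / RatFunc.X ^ q ^ i ≠ 0 := by
    intro h
    apply h1
    have h2 : (RatFunc.X : RatFunc ℚ) ^ q ^ d / RatFunc.X ^ q ^ i = 1 := by
      linear_combination -h
    rw [div_eq_one_iff_eq hXi] at h2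
    rw [h2, sub_self]
  rw [hN, hD, div_eq_div_iff hne1 h1]
  field_simp
  ring

end HookAux

open Finset HookAux

/-- For `n ≥ k ≥ 0` and `m ≥ 1`, the hook principal specialization factors as
`S_{(m,1^k)}(1,…,t^n) = [n+m choose n-k]_{q,t} · φ^{n-k}(∏_{i=1}^{k} (t^{q^{m+k}} - t^{q^i})/(t^{q^i} - t))`,
and in particular `S_{(m,1^k)}(1,…,t^n) = [n+m choose n-k]_{q,t} · φ^{n-k}(S_{(m,1^k)}(1,…,t^k))`,
where `φ^{n-k}` substitutes `t ↦ t^{q^{n-k}}`. -/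
theorem hook_specialization_factorization (q m k n : ℕ) (hq : 2 ≤ q) (hm : 1 ≤ m)
    (hk : k ≤ n) :
    Sspec q (n + 1) (hookLam m k) RatFunc.X
        = qtbin q (n + m) (n - k) RatFunc.X *
            ∏ i ∈ Finset.range k,
              (((RatFunc.X : RatFunc ℚ) ^ q ^ (n - k)) ^ q ^ (m + k)
                  - (RatFunc.X ^ q ^ (n - k)) ^ q ^ (i + 1))
                / ((RatFunc.X ^ q ^ (n - k)) ^ q ^ (i + 1) - RatFunc.X ^ q ^ (n - k)) ∧
      Sspec q (n + 1) (hookLam m k) RatFunc.X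
        = qtbin q (n + m) (n - k) RatFunc.X *
            Sspec q (k + 1) (hookLam m k) (RatFunc.X ^ q ^ (n - k)) := by
  obtain ⟨d, rfl⟩ : ∃ d, n = d + k := ⟨n - k, by omega⟩
  rw [(by omega : d + k - k = d)]
  have main := Sspec_hook q m d k (d + k + m) hm (by omega) RatFunc.X (hu_X q hq)
  have hqt := qtbin_eq q (d + k + m) d hq (by omega)
  have hc1 : Sspec q (d + k + 1) (hookLam m k) RatFunc.X
      = qtbin q (d + k + m) d RatFunc.X *
          ∏ i ∈ Finset.range k,
            (((RatFunc.X : RatFunc ℚ) ^ q ^ d) ^ q ^ (m + k)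
                - (RatFunc.X ^ q ^ d) ^ q ^ (i + 1))
              / ((RatFunc.X ^ q ^ d) ^ q ^ (i + 1) - RatFunc.X ^ q ^ d) := by
    rw [main, hqt]
    congr 1
    rw [prod_Ico_eq_prod_range, (by omega : d + k - d = k)]
    refine prod_congr rfl fun i _ => ?_
    have hpow : ∀ a b : ℕ, d + a = b →
        ((RatFunc.X : RatFunc ℚ) ^ q ^ d) ^ q ^ a = RatFunc.X ^ q ^ b := by
      intro a b h
      rw [← pow_mul, ← pow_add, h]
    rw [hpow (m + k) (d + k + m) (by omega), hpow (i + 1) (d + i + 1) (by omega)]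
  have hB : Sspec q (k + 1) (hookLam m k) (RatFunc.X ^ q ^ d)
      = ∏ i ∈ Finset.range k,
          (((RatFunc.X : RatFunc ℚ) ^ q ^ d) ^ q ^ (m + k)
              - (RatFunc.X ^ q ^ d) ^ q ^ (i + 1))
            / ((RatFunc.X ^ q ^ d) ^ q ^ (i + 1) - RatFunc.X ^ q ^ d) := by
    have main2 := Sspec_hook q m 0 k (m + k) hm (by omega) (RatFunc.X ^ q ^ d)
      (hu_Xc q d hq)
    simp only [Nat.zero_add, range_zero, prod_empty, one_mul, ← range_eq_Ico,
      pow_zero, pow_one] at main2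
    exact main2
  exact ⟨hc1, by rw [hB]; exact hc1⟩
end
end

section
/- Define the (q,t)-ribbon number for a composition α of n by inclusion–exclusion: r_α(q,t) := Σ_{β refined by α} (-1)^{ℓ(α) - ℓ(β)} [n choose β]_{q,t}. Then for the hook composition α = (1^k, m) with n = m + k, one has S_{(m,1^k)}(1,t,...,t^k) = r_{(1^k,m)}(q,t). More generally, for n ≥ k, S_{(m,1^k)}(1,t,...,t^n) = [m+n choose n-k]_{q,t} · r_{(1^k,m)}(q, t^{q^{n-k}}). -/
noncomputable section

/-- The (q,t)-factorial `m!_{q,t}`, as a function of `t`. -/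
def qtfact (q m : ℕ) (t : RatFunc ℚ) : RatFunc ℚ :=
  ∏ i ∈ Finset.range m, (1 - t ^ (q ^ m - q ^ i))

/-- The (q,t)-multinomial `[n choose β]_{q,t} = n!_{q,t}/β!_{q,t}` for a composition `β`
of `n`, where `β!_{q,t} := ∏_s β_s!_{q,t^{q^{σ_{s-1}}}}`. -/
def qtmultiC (q n : ℕ) (c : Composition n) (t : RatFunc ℚ) : RatFunc ℚ :=
  qtfact q n t / ∏ s : Fin c.length, qtfact q (c.blocksFun s) (t ^ q ^ c.sizeUpTo (s : ℕ))

/-- The (q,t)-ribbon number `r_α(q,t) := Σ_{β refined by α} (-1)^{ℓ(α)-ℓ(β)} [n choose β]_{q,t}`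
(as a function of `t`). `β` is refined by `α` iff the partial-sum set (boundaries) of `β`
is contained in that of `α`. -/
def ribbonQT (q n : ℕ) (c : Composition n) (t : RatFunc ℚ) : RatFunc ℚ :=
  ∑ b ∈ Finset.univ.filter (fun b : Composition n => b.boundaries ⊆ c.boundaries),
    (-1 : RatFunc ℚ) ^ (c.length - b.length) * qtmultiC q n b t

/-- The reverse hook composition `(1^k, m)` of `k + m`. -/
def hookComp (k m : ℕ) (hm : 0 < m) : Composition (k + m) where
  blocks := List.replicate k 1 ++ [m]
  blocks_pos := by
    intro i hi
    rcases List.mem_append.mp hi with h | h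
    · rcases List.eq_of_mem_replicate h with rfl; exact one_pos
    · rcases List.mem_singleton.mp h with rfl; exact hm
  blocks_sum := by simp [List.sum_replicate, smul_eq_mul]

abbrev K := RatFunc ℚ

def Good (s : K) : Prop := s ≠ 0 ∧ ∀ a : ℕ, 0 < a → s ^ a ≠ 1

lemma good_X_pow (p : ℕ) (hp : 0 < p) : Good ((RatFunc.X : K) ^ p) := by
  constructor
  · exact pow_ne_zero _ RatFunc.X_ne_zero
  intro a ha hx
  rw [← pow_mul] at hx
  rw [← RatFunc.algebraMap_X, ← map_pow, ← map_one (algebraMap (Polynomial ℚ) K)] at hx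
  have := RatFunc.algebraMap_injective ℚ hx
  have h2 := congrArg Polynomial.natDegree this
  simp [Polynomial.natDegree_X_pow] at h2
  rcases h2 with h2 | h2 <;> omega

lemma Good.pow {s : K} (hs : Good s) (p : ℕ) (hp : 0 < p) : Good (s ^ p) := by
  refine ⟨pow_ne_zero _ hs.1, fun a ha => ?_⟩
  rw [← pow_mul]
  exact hs.2 _ (Nat.mul_pos hp ha)

lemma Good.one_sub_ne {s : K} (hs : Good s) {a : ℕ} (ha : 0 < a) : (1:K) - s ^ a ≠ 0 := by
  intro h
  exact hs.2 a ha (by linear_combination -h)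

lemma Good.sub_ne {s : K} (hs : Good s) {a b : ℕ} (h : b < a) : s ^ b - s ^ a ≠ 0 := by
  have h1 : s ^ a = s ^ b * s ^ (a - b) := by rw [← pow_add]; congr 1; omega
  rw [h1]
  have h2 := hs.one_sub_ne (a := a - b) (by omega)
  have h3 : s ^ b ≠ 0 := pow_ne_zero _ hs.1
  intro h4
  apply h2
  have h5 : s ^ b * (1 - s ^ (a-b)) = 0 := by linear_combination h4
  rcases mul_eq_zero.mp h5 with h6 | h6
  · exact absurd h6 h3
  · exact h6


/-- minimal boundary above `i` -/
def eF (S : Finset ℕ) (N i : ℕ) : ℕ :=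
  (insert N (S.filter fun x => i < x)).min' (Finset.insert_nonempty _ _)

lemma eF_le (S : Finset ℕ) (N i : ℕ) : eF S N i ≤ N :=
  Finset.min'_le _ _ (Finset.mem_insert_self _ _)

lemma lt_eF {S : Finset ℕ} {N i : ℕ} (hi : i < N) : i < eF S N i := by
  rw [eF, Finset.lt_min'_iff]
  intro y hy
  rcases Finset.mem_insert.mp hy with rfl | hy
  · exact hi
  · exact (Finset.mem_filter.mp hy).2

lemma eF_empty (N i : ℕ) : eF ∅ N i = N := by
  simp [eF]

lemma eF_insert_of_le {S : Finset ℕ} {N a i : ℕ} (h : a ≤ i) :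
    eF (insert a S) N i = eF S N i := by
  unfold eF
  congr 1
  rw [Finset.filter_insert, if_neg (by omega)]

lemma eF_insert_self {S : Finset ℕ} {N d k : ℕ} (hS : S ⊆ Finset.Icc (d+2) k) (hN : k < N)
    (hd : d + 1 ≤ k) : eF (insert (d+1) S) N d = d + 1 := by
  apply le_antisymm
  · apply Finset.min'_le
    apply Finset.mem_insert_of_mem
    rw [Finset.mem_filter]
    exact ⟨Finset.mem_insert_self _ _, by omega⟩
  · apply Finset.le_min'
    intro y hy
    rcases Finset.mem_insert.mp hy with rfl | hy
    · omega
    · rw [Finset.mem_filter, Finset.mem_insert] at hy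
      rcases hy.1 with rfl | hy1
      · omega
      · have := hS hy1
        rw [Finset.mem_Icc] at this
        omega

lemma eF_shift {S : Finset ℕ} {N d k : ℕ} (hS : S ⊆ Finset.Icc (d+2) k) :
    eF S N d = eF S N (d+1) := by
  have h : Finset.filter (fun x => d < x) S = Finset.filter (fun x => d+1 < x) S := by
    apply Finset.filter_congr
    intro x hx
    have := hS hx
    rw [Finset.mem_Icc] at this
    omega
  unfold eF
  congr 1
  rw [h]

/-- level-`d` weighted inclusion-exclusion sum -/
def Hs (q N k : ℕ) (s : K) (d : ℕ) : K :=
  ∑ S ∈ (Finset.Icc (d+1) k).powerset,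
    (-1 : K) ^ (k - d - S.card) *
      ((1 - s ^ (q ^ N - q ^ d)) / (1 - s ^ (q ^ (eF S N d) - 1)) *
        ∏ i ∈ Finset.Ico (d+1) N, (1 - s ^ (q ^ N - q ^ i)) / (1 - s ^ (q ^ (eF S N i) - q ^ i)))

lemma pow_pos_sub {q a b : ℕ} (hq : 2 ≤ q) (h : a < b) : 0 < q ^ b - q ^ a := by
  have := Nat.pow_lt_pow_right (show 1 < q by omega) h
  omega

lemma pow_pos_sub_one {q b : ℕ} (hq : 2 ≤ q) (h : 0 < b) : 0 < q ^ b - 1 := by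
  have : 1 < q ^ b := Nat.one_lt_pow (by omega) (by omega)
  omega

lemma Hs_base {q N k : ℕ} {s : K} (hq : 2 ≤ q) (hs : Good s) (hN : k < N) :
    Hs q N k s k = (1 - s ^ (q ^ N - q ^ k)) / (1 - s ^ (q ^ N - 1)) := by
  unfold Hs
  rw [show Finset.Icc (k+1) k = ∅ by rw [Finset.Icc_eq_empty_iff]; omega]
  rw [Finset.powerset_empty, Finset.sum_singleton]
  rw [Finset.card_empty, Nat.sub_zero, Nat.sub_self, pow_zero, one_mul, eF_empty]
  rw [Finset.prod_congr rfl (g := fun _ => (1:K)) ?_, Finset.prod_const_one, mul_one]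
  intro i hi
  rw [Finset.mem_Ico] at hi
  rw [eF_empty]
  exact div_self (hs.one_sub_ne (pow_pos_sub hq hi.2))


lemma pair_key (A B P α β γ σ : K) (hα : 1 - α ≠ 0) (hβ : 1 - β ≠ 0) (hγ : 1 - γ ≠ 0)
    (h : α * γ = β) :
    (-σ) * (A / (1 - β) * (B / (1 - γ) * P)) + σ * (A / (1 - α) * (B / (1 - γ) * P))
      = A * (α / (1 - α)) * (σ * (B / (1 - β) * P)) := by
  subst h
  field_simp
  ring

lemma Hs_rec {q N k d : ℕ} {s : K} (hq : 2 ≤ q) (hs : Good s) (hk : d < k) (hN : k < N) :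
    Hs q N k s d
      = (1 - s ^ (q ^ N - q ^ d))
          * (s ^ (q ^ (d+1) - 1) / (1 - s ^ (q ^ (d+1) - 1)))
          * Hs q N k s (d+1) := by
  have hIcc : Finset.Icc (d+1) k = insert (d+1) (Finset.Icc (d+2) k) := by
    ext x; simp only [Finset.mem_Icc, Finset.mem_insert]; omega
  have hmem : (d+1) ∉ Finset.Icc (d+2) k := by simp [Finset.mem_Icc]
  unfold Hs
  rw [hIcc, Finset.sum_powerset_insert hmem, Finset.mul_sum, ← Finset.sum_add_distrib]
  apply Finset.sum_congr rfl
  intro S hS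
  rw [Finset.mem_powerset] at hS
  have hd1 : (d+1) ∉ S := fun h => hmem (hS h)
  have hcard : (insert (d+1) S).card = S.card + 1 := Finset.card_insert_of_notMem hd1
  have hcardle : S.card ≤ k - d - 1 := by
    have := Finset.card_le_card hS
    rw [Nat.card_Icc] at this
    omega
  have e0 : eF S N d = eF S N (d+1) := eF_shift hS
  have e1 : eF (insert (d+1) S) N d = d + 1 := eF_insert_self hS hN (by omega)
  have e2 : ∀ i ∈ Finset.Ico (d+1) N,
      (1 - s ^ (q ^ N - q ^ i)) / (1 - s ^ (q ^ (eF (insert (d+1) S) N i) - q ^ i))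
        = (1 - s ^ (q ^ N - q ^ i)) / (1 - s ^ (q ^ (eF S N i) - q ^ i)) := by
    intro i hi
    rw [Finset.mem_Ico] at hi
    rw [eF_insert_of_le hi.1]
  rw [Finset.prod_congr rfl e2]
  set E := eF S N (d+1) with hE
  have hdE : d + 1 < E := lt_eF (by omega)
  have hEN : E ≤ N := eF_le _ _ _
  have hsplit : ∏ i ∈ Finset.Ico (d+1) N, (1 - s ^ (q ^ N - q ^ i)) / (1 - s ^ (q ^ (eF S N i) - q ^ i))
      = (1 - s ^ (q ^ N - q ^ (d+1))) / (1 - s ^ (q ^ E - q ^ (d+1)))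
        * ∏ i ∈ Finset.Ico (d+2) N, (1 - s ^ (q ^ N - q ^ i)) / (1 - s ^ (q ^ (eF S N i) - q ^ i)) := by
    rw [Finset.prod_eq_prod_Ico_succ_bot (by omega : d + 1 < N)]
  rw [hsplit, e0, e1, hcard]
  set P := ∏ i ∈ Finset.Ico (d+2) N, (1 - s ^ (q ^ N - q ^ i)) / (1 - s ^ (q ^ (eF S N i) - q ^ i))
  set A := 1 - s ^ (q ^ N - q ^ d)
  set B := 1 - s ^ (q ^ N - q ^ (d+1))
  have hsign1 : (-1 : K) ^ (k - d - S.card) = -(-1 : K) ^ (k - (d+1) - S.card) := by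
    rw [show k - d - S.card = (k - (d+1) - S.card) + 1 by omega, pow_succ]
    ring
  have hsign2 : (-1 : K) ^ (k - d - (S.card + 1)) = (-1 : K) ^ (k - (d+1) - S.card) := by
    congr 1; omega
  rw [hsign1, hsign2]
  set σ := (-1 : K) ^ (k - (d+1) - S.card)
  have hαγ : s ^ (q ^ (d+1) - 1) * s ^ (q ^ E - q ^ (d+1)) = s ^ (q ^ E - 1) := by
    rw [← pow_add]
    congr 1
    have h1 : q ^ (d+1) ≤ q ^ E := Nat.pow_le_pow_right (by omega) (by omega)
    have h2 : 1 ≤ q ^ (d+1) := Nat.one_le_two_pow.trans (Nat.pow_le_pow_left (by omega) _)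
    omega
  have hα : (1:K) - s ^ (q ^ (d+1) - 1) ≠ 0 := hs.one_sub_ne (pow_pos_sub_one hq (by omega))
  have hβ : (1:K) - s ^ (q ^ E - 1) ≠ 0 := hs.one_sub_ne (pow_pos_sub_one hq (by omega))
  have hγ : (1:K) - s ^ (q ^ E - q ^ (d+1)) ≠ 0 := hs.one_sub_ne (pow_pos_sub hq (by omega))
  set α := s ^ (q ^ (d+1) - 1)
  set β := s ^ (q ^ E - 1)
  set γ := s ^ (q ^ E - q ^ (d+1))
  exact pair_key _ _ _ _ _ _ _ hα hβ hγ hαγ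

lemma Hs_closed {q N k : ℕ} {s : K} (hq : 2 ≤ q) (hs : Good s) (hN : k < N) :
    ∀ d, d ≤ k → Hs q N k s d
      = (1 - s ^ (q ^ N - q ^ d)) / (1 - s ^ (q ^ N - 1)) *
          ∏ b ∈ Finset.Ico (d+1) (k+1),
            s ^ (q ^ b - 1) * (1 - s ^ (q ^ N - q ^ b)) / (1 - s ^ (q ^ b - 1)) := by
  intro d
  induction' hj : k - d with j ih generalizing d
  · intro hd
    have : d = k := by omega
    subst this
    rw [Hs_base hq hs hN, show Finset.Ico (d+1) (d+1) = ∅ from Finset.Ico_self _,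
      Finset.prod_empty, mul_one]
  · intro hd
    have hdk : d < k := by omega
    rw [Hs_rec hq hs hdk hN, ih (d+1) (by omega) (by omega),
      Finset.prod_eq_prod_Ico_succ_bot (by omega : d + 1 < k + 1)]
    ring



/- ### boundaries bridge -/

lemma mem_boundaries_iff {n : ℕ} (b : Composition n) (x : Fin (n+1)) :
    x ∈ b.boundaries ↔ ∃ j : Fin (b.length+1), b.sizeUpTo j = (x:ℕ) := by
  constructor
  · intro hx
    rw [Composition.boundaries, Finset.mem_map] at hx
    obtain ⟨j, -, hj⟩ := hx
    exact ⟨j, by rw [← hj]; rfl⟩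
  · rintro ⟨j, hj⟩
    rw [Composition.boundaries, Finset.mem_map]
    refine ⟨j, Finset.mem_univ _, ?_⟩
    have : (b.boundary.toEmbedding j : ℕ) = b.sizeUpTo j := rfl
    rw [Fin.ext_iff, this, hj]

lemma hookComp_length (k m : ℕ) (hm : 0 < m) : (hookComp k m hm).length = k + 1 := by
  simp [hookComp, Composition.length]

lemma hookComp_sizeUpTo_le (k m : ℕ) (hm : 0 < m) {j : ℕ} (h : j ≤ k) :
    (hookComp k m hm).sizeUpTo j = j := by
  rw [Composition.sizeUpTo]
  show ((List.replicate k 1 ++ [m]).take j).sum = j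
  rw [List.take_append_of_le_length (by simp [h]), List.take_replicate]
  simp [Nat.min_eq_left h]

lemma mem_hook_boundaries (k m : ℕ) (hm : 0 < m) (x : Fin (k + m + 1)) :
    x ∈ (hookComp k m hm).boundaries ↔ (x:ℕ) ≤ k ∨ (x:ℕ) = k + m := by
  rw [mem_boundaries_iff]
  constructor
  · rintro ⟨j, hj⟩
    rcases le_or_gt (j:ℕ) k with h | h
    · left; rw [hookComp_sizeUpTo_le k m hm h] at hj; omega
    · right
      rw [Composition.sizeUpTo_ofLength_le _ _
        (by have := hookComp_length k m hm; omega)] at hj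
      omega
  · intro h
    rcases h with h | h
    · refine ⟨⟨(x:ℕ), by rw [hookComp_length]; omega⟩, ?_⟩
      exact hookComp_sizeUpTo_le k m hm h
    · refine ⟨⟨k+1, by rw [hookComp_length]; omega⟩, ?_⟩
      rw [Composition.sizeUpTo_ofLength_le _ _
        (by have := hookComp_length k m hm; simp; omega)]
      omega


/-- the set of internal boundaries of `b` (those in `[1,k]`) -/
def Sof {n : ℕ} (k : ℕ) (b : Composition n) : Finset ℕ :=
  (Finset.Icc 1 k).filter (fun x => ∃ j : Fin (b.length+1), b.sizeUpTo (j:ℕ) = x)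

lemma mem_Sof {n k x : ℕ} {b : Composition n} :
    x ∈ Sof k b ↔ (1 ≤ x ∧ x ≤ k) ∧ ∃ j : Fin (b.length+1), b.sizeUpTo (j:ℕ) = x := by
  simp [Sof, Finset.mem_filter, Finset.mem_Icc]

section PartI

variable {q k m : ℕ} (hm : 0 < m)

lemma sof_bound {S : Finset ℕ} (hS : S ⊆ Finset.Icc 1 k) :
    ∀ y ∈ insert 0 (insert (k+m) S), y < k + m + 1 := by
  intro y hy
  rcases Finset.mem_insert.mp hy with rfl | hy
  · omega
  rcases Finset.mem_insert.mp hy with rfl | hy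
  · omega
  · have := hS hy; rw [Finset.mem_Icc] at this; omega

lemma boundaries_eq {b : Composition (k+m)}
    (hb : b.boundaries ⊆ (hookComp k m hm).boundaries) :
    b.boundaries = (insert 0 (insert (k+m) (Sof k b))).attachFin
      (sof_bound (Finset.filter_subset _ _)) := by
  ext x
  rw [Finset.mem_attachFin, mem_boundaries_iff]
  constructor
  · rintro ⟨j, hj⟩
    have hxb : x ∈ b.boundaries := (mem_boundaries_iff b x).mpr ⟨j, hj⟩
    have hx := (mem_hook_boundaries k m hm x).mp (hb hxb)
    rcases Nat.eq_zero_or_pos (x:ℕ) with h0 | h0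
    · rw [h0]; exact Finset.mem_insert_self _ _
    rcases hx with hx | hx
    · refine Finset.mem_insert_of_mem (Finset.mem_insert_of_mem ?_)
      exact mem_Sof.mpr ⟨⟨h0, hx⟩, j, hj⟩
    · rw [hx]; exact Finset.mem_insert_of_mem (Finset.mem_insert_self _ _)
  · intro hx
    rcases Finset.mem_insert.mp hx with h0 | hx
    · refine ⟨0, ?_⟩
      rw [h0]
      simp
    rcases Finset.mem_insert.mp hx with hn | hx
    · refine ⟨⟨b.length, by omega⟩, ?_⟩
      rw [hn]
      simpa using b.sizeUpTo_length
    · obtain ⟨-, j, hj⟩ := mem_Sof.mp hx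
      exact ⟨j, hj⟩

lemma card_Sof {b : Composition (k+m)}
    (hb : b.boundaries ⊆ (hookComp k m hm).boundaries) :
    b.length = (Sof k b).card + 1 := by
  have h1 := b.card_boundaries_eq_succ_length
  rw [boundaries_eq hm hb, Finset.card_attachFin] at h1
  rw [Finset.card_insert_of_notMem, Finset.card_insert_of_notMem] at h1
  · omega
  · intro h
    have := mem_Sof.mp h
    omega
  · intro h
    rcases Finset.mem_insert.mp h with h | h
    · omega
    · have := mem_Sof.mp h
      omega

lemma sizeUpTo_index_eq_eF {b : Composition (k+m)}
    (hb : b.boundaries ⊆ (hookComp k m hm).boundaries) {i : ℕ} (hi : i < k + m) :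
    b.sizeUpTo ((b.index ⟨i, hi⟩ : ℕ) + 1) = eF (Sof k b) (k+m) i := by
  set E := b.sizeUpTo ((b.index ⟨i, hi⟩ : ℕ) + 1) with hE
  have hiE : i < E := b.lt_sizeUpTo_index_succ ⟨i, hi⟩
  have hEn : E ≤ k + m := b.sizeUpTo_le _
  apply le_antisymm
  · apply Finset.le_min'
    intro y hy
    rcases Finset.mem_insert.mp hy with rfl | hy
    · exact hEn
    rw [Finset.mem_filter] at hy
    obtain ⟨hySof, hyi⟩ := hy
    obtain ⟨-, j, hj⟩ := mem_Sof.mp hySof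
    rcases le_or_gt ((b.index ⟨i, hi⟩ : ℕ) + 1) (j:ℕ) with h | h
    · rw [← hj]
      exact b.monotone_sizeUpTo h
    · exfalso
      have : b.sizeUpTo (j:ℕ) ≤ b.sizeUpTo (b.index ⟨i, hi⟩ : ℕ) :=
        b.monotone_sizeUpTo (by omega)
      have h2 : b.sizeUpTo (b.index ⟨i, hi⟩ : ℕ) ≤ i := b.sizeUpTo_index_le ⟨i, hi⟩
      omega
  · have hEb : (⟨E, by omega⟩ : Fin (k+m+1)) ∈ b.boundaries := by
      rw [mem_boundaries_iff]
      exact ⟨(b.index ⟨i, hi⟩).succ, rfl⟩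
    have hx := (mem_hook_boundaries k m hm _).mp (hb hEb)
    simp only at hx
    have hmem : E ∈ insert (k+m) ((Sof k b).filter (fun x => i < x)) := by
      rcases hx with hx | hx
      · refine Finset.mem_insert_of_mem ?_
        rw [Finset.mem_filter]
        refine ⟨mem_Sof.mpr ⟨⟨by omega, hx⟩, (b.index ⟨i, hi⟩).succ, rfl⟩, hiE⟩
      · rw [hx]; exact Finset.mem_insert_self _ _
    exact Finset.min'_le _ _ hmem

end PartI


section PartIb

variable {q k m : ℕ} (hm : 0 < m)

lemma qtmultiC_eq (hq : 2 ≤ q) {s : K} {b : Composition (k+m)}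
    (hb : b.boundaries ⊆ (hookComp k m hm).boundaries) :
    qtmultiC q (k+m) b s
      = ∏ i ∈ Finset.range (k+m),
          ((1 - s ^ (q ^ (k+m) - q ^ i)) / (1 - s ^ (q ^ (eF (Sof k b) (k+m) i) - q ^ i))) := by
  have hden : (∏ j : Fin b.length, qtfact q (b.blocksFun j) (s ^ q ^ b.sizeUpTo (j:ℕ)))
      = ∏ i ∈ Finset.range (k+m), (1 - s ^ (q ^ (eF (Sof k b) (k+m) i) - q ^ i)) := by
    have h1 : ∀ j : Fin b.length,
        qtfact q (b.blocksFun j) (s ^ q ^ b.sizeUpTo (j:ℕ))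
          = ∏ i : Fin (b.blocksFun j),
              (1 - s ^ (q ^ (b.sizeUpTo ((j:ℕ)+1)) - q ^ (b.sizeUpTo (j:ℕ) + (i:ℕ)))) := by
      intro j
      rw [qtfact, ← Fin.prod_univ_eq_prod_range]
      apply Finset.prod_congr rfl
      intro i _
      congr 1
      rw [← pow_mul]
      congr 1
      rw [Composition.sizeUpTo_succ']
      rw [Nat.mul_sub, ← pow_add, ← pow_add]
    rw [Finset.prod_congr rfl (fun j _ => h1 j)]
    rw [Finset.prod_sigma']
    rw [show ((Finset.univ : Finset (Fin b.length)).sigma fun j => (Finset.univ : Finset (Fin (b.blocksFun j)))) = Finset.univ from Finset.univ_sigma_univ]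
    set g : Fin (k+m) → K := fun x =>
      (1 - s ^ (q ^ (eF (Sof k b) (k+m) (x:ℕ)) - q ^ (x:ℕ))) with hg
    have h2 : ∀ p : (Σ j : Fin b.length, Fin (b.blocksFun j)),
        (1 - s ^ (q ^ (b.sizeUpTo ((p.1:ℕ)+1)) - q ^ (b.sizeUpTo (p.1:ℕ) + (p.2:ℕ))))
          = g (b.blocksFinEquiv p) := by
      rintro ⟨j, i⟩
      have hval : ((b.blocksFinEquiv ⟨j, i⟩ : Fin (k+m)) : ℕ) = b.sizeUpTo (j:ℕ) + (i:ℕ) :=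
        b.coe_embedding j i
      have hidx : b.index (b.blocksFinEquiv ⟨j, i⟩) = j := b.index_embedding j i
      rw [hg]
      simp only
      rw [hval]
      congr 2
      have := sizeUpTo_index_eq_eF hm hb (i := b.sizeUpTo (j:ℕ) + (i:ℕ))
        (b.blocksFinEquiv ⟨j, i⟩).2
      rw [← this]
      congr 2
      rw [show (⟨b.sizeUpTo (j:ℕ) + (i:ℕ), (b.blocksFinEquiv ⟨j, i⟩).2⟩ : Fin (k+m))
          = b.blocksFinEquiv ⟨j, i⟩ from by rw [Fin.ext_iff, hval], hidx]
    rw [Finset.prod_congr rfl (fun p _ => h2 p)]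
    rw [Equiv.prod_comp b.blocksFinEquiv g]
    rw [hg, ← Fin.prod_univ_eq_prod_range]
  rw [qtmultiC, hden, qtfact, ← Finset.prod_div_distrib]

end PartIb


lemma ribbon_eq_Hs (q k m : ℕ) (hq : 2 ≤ q) (hm : 0 < m) {s : K} (hs : Good s) :
    ribbonQT q (k+m) (hookComp k m hm) s = Hs q (k+m) k s 0 := by
  rw [ribbonQT, Hs]
  refine Finset.sum_bij (fun b _ => Sof k b) ?_ ?_ ?_ ?_
  · intro b hb
    rw [Finset.mem_powerset]
    exact Finset.filter_subset _ _
  · intro b₁ hb₁ b₂ hb₂ hSof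
    rw [Finset.mem_filter] at hb₁ hb₂
    have hSof' : Sof k b₁ = Sof k b₂ := hSof
    have h1 := boundaries_eq hm hb₁.2
    have h2 := boundaries_eq hm hb₂.2
    have hbd : b₁.boundaries = b₂.boundaries := by
      rw [h1, h2]
      congr 1
      rw [hSof']
    have : b₁.toCompositionAsSet = b₂.toCompositionAsSet := by
      apply CompositionAsSet.ext
      rw [Composition.toCompositionAsSet_boundaries, Composition.toCompositionAsSet_boundaries,
        hbd]
    exact (compositionEquiv (k+m)).injective this
  · intro S hS
    rw [Finset.mem_powerset] at hS
    have hbound := sof_bound (m := m) hS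
    set cas : CompositionAsSet (k+m) :=
      ⟨(insert 0 (insert (k+m) S)).attachFin hbound,
        by rw [Finset.mem_attachFin]; exact Finset.mem_insert_self _ _,
        by rw [Finset.mem_attachFin]; simp⟩ with hcas
    set b := cas.toComposition with hb
    have hbB : b.boundaries = (insert 0 (insert (k+m) S)).attachFin hbound :=
      CompositionAsSet.toComposition_boundaries cas
    have hmemf : b ∈ Finset.univ.filter
        (fun b : Composition (k+m) => b.boundaries ⊆ (hookComp k m hm).boundaries) := by
      rw [Finset.mem_filter]
      refine ⟨Finset.mem_univ _, ?_⟩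
      intro x hx
      rw [hbB, Finset.mem_attachFin] at hx
      rw [mem_hook_boundaries]
      rcases Finset.mem_insert.mp hx with h | hx
      · left; omega
      rcases Finset.mem_insert.mp hx with h | hx
      · right; omega
      · have := hS hx; rw [Finset.mem_Icc] at this; left; omega
    refine ⟨b, hmemf, ?_⟩
    ext x
    rw [mem_Sof]
    constructor
    · rintro ⟨⟨hx1, hxk⟩, j, hj⟩
      have hxb : (⟨x, by omega⟩ : Fin (k+m+1)) ∈ b.boundaries :=
        (mem_boundaries_iff b _).mpr ⟨j, hj⟩
      rw [hbB, Finset.mem_attachFin] at hxb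
      simp only at hxb
      rcases Finset.mem_insert.mp hxb with h | hxb
      · omega
      rcases Finset.mem_insert.mp hxb with h | hxb
      · omega
      · exact hxb
    · intro hxS
      have hxk := hS hxS
      rw [Finset.mem_Icc] at hxk
      have hxb : (⟨x, by omega⟩ : Fin (k+m+1)) ∈ b.boundaries := by
        rw [hbB, Finset.mem_attachFin]
        exact Finset.mem_insert_of_mem (Finset.mem_insert_of_mem hxS)
      obtain ⟨j, hj⟩ := (mem_boundaries_iff b _).mp hxb
      exact ⟨⟨hxk.1, hxk.2⟩, j, hj⟩
  · intro b hb
    rw [Finset.mem_filter] at hb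
    have hbd := hb.2
    beta_reduce
    rw [hookComp_length, card_Sof hm hbd, qtmultiC_eq hm hq hbd]
    rw [show k + 1 - ((Sof k b).card + 1) = k - 0 - (Sof k b).card by omega]
    congr 1
    rw [Finset.range_eq_Ico, Finset.prod_eq_prod_Ico_succ_bot (by omega : 0 < k + m),
      pow_zero]


lemma goodX : Good (RatFunc.X : K) := by
  have := good_X_pow 1 one_pos
  rwa [pow_one] at this

lemma Good.sub_ne' {s : K} (hs : Good s) {a b : ℕ} (h : a ≠ b) : s ^ a - s ^ b ≠ 0 := by
  rcases lt_or_gt_of_ne h with h | h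
  · exact hs.sub_ne h
  · intro h2
    exact hs.sub_ne h (by linear_combination -h2)

lemma telescope (g : ℕ → K) (a : ℕ) :
    ∀ b, a ≤ b → (∀ j, a ≤ j → j ≤ b → g j ≠ 0) →
      ∏ j ∈ Finset.Ico a b, (g (j+1) / g j) = g b / g a := by
  intro b
  induction b with
  | zero =>
    intro hab hg
    have : a = 0 := by omega
    subst this
    simp [div_self (hg 0 le_rfl le_rfl)]
  | succ b ih =>
    intro hab hg
    rcases Nat.lt_or_ge a (b+1) with h | h
    · have hab' : a ≤ b := by omega
      rw [Finset.prod_Ico_succ_top hab', ih hab' (fun j h1 h2 => hg j h1 (by omega))]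
      have hgb : g b ≠ 0 := hg b hab' (by omega)
      rw [div_mul_div_comm, mul_comm (g b) (g (b+1)),
        mul_div_mul_right _ _ hgb]
    · have : a = b + 1 := by omega
      subst this
      simp [div_self (hg (b+1) le_rfl le_rfl)]


/-- `X^(q^a)` -/
def xp (q a : ℕ) : K := (RatFunc.X : K) ^ q ^ a

lemma xp_sub_ne {q : ℕ} (hq : 2 ≤ q) {a b : ℕ} (h : a ≠ b) : xp q a - xp q b ≠ 0 := by
  apply goodX.sub_ne'
  intro hc
  rcases Nat.lt_or_ge a b with h1 | h1
  · have := Nat.pow_lt_pow_right (show 1 < q by omega) h1; omega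
  · have h2 : b < a := by omega
    have := Nat.pow_lt_pow_right (show 1 < q by omega) h2; omega

/-- Vandermonde-block product -/
def Wd (q a b : ℕ) : K := ∏ j ∈ Finset.Ico a b, ∏ i ∈ Finset.Ico a j, (xp q j - xp q i)

lemma Wd_ne_zero {q : ℕ} (hq : 2 ≤ q) (a b : ℕ) : Wd q a b ≠ 0 := by
  apply Finset.prod_ne_zero_iff.mpr
  intro j hj
  apply Finset.prod_ne_zero_iff.mpr
  intro i hi
  rw [Finset.mem_Ico] at hi
  exact xp_sub_ne hq (by omega)

lemma Wd_succ_top {q a b : ℕ} (h : a ≤ b) :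
    Wd q a (b+1) = Wd q a b * ∏ i ∈ Finset.Ico a b, (xp q b - xp q i) := by
  rw [Wd, Finset.prod_Ico_succ_top h]
  rfl

lemma Wd_bot {q a b : ℕ} (h : a ≤ b) :
    Wd q a b = Wd q (a+1) b * ∏ j ∈ Finset.Ico (a+1) b, (xp q j - xp q a) := by
  rcases Nat.eq_or_lt_of_le h with rfl | h
  · simp [Wd]
  rw [Wd, Finset.prod_eq_prod_Ico_succ_bot h, Finset.Ico_self, Finset.prod_empty, one_mul,
    Wd, ← Finset.prod_mul_distrib]
  apply Finset.prod_congr rfl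
  intro j hj
  rw [Finset.mem_Ico] at hj
  rw [Finset.prod_eq_prod_Ico_succ_bot (by omega : a < j), mul_comm]

lemma shift_reindex (f : ℕ → ℕ → K) (c n : ℕ) :
    ∏ j ∈ Finset.Ico c n, ∏ i ∈ Finset.Ico c j, f (j+1) (i+1)
      = ∏ j ∈ Finset.Ico (c+1) (n+1), ∏ i ∈ Finset.Ico (c+1) j, f j i := by
  rw [Finset.prod_Ico_eq_prod_range, Finset.prod_Ico_eq_prod_range]
  rw [show n + 1 - (c + 1) = n - c by omega]
  apply Finset.prod_congr rfl
  intro t _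
  rw [Finset.prod_Ico_eq_prod_range, Finset.prod_Ico_eq_prod_range]
  rw [show c + t - c = t by omega, show c + 1 + t - (c + 1) = t by omega]
  apply Finset.prod_congr rfl
  intro u _
  rw [show c + t + 1 = c + 1 + t by omega, show c + u + 1 = c + 1 + u by omega]


lemma shift1 (f : ℕ → K) (c n : ℕ) :
    ∏ i ∈ Finset.Ico c n, f (i+1) = ∏ a ∈ Finset.Ico (c+1) (n+1), f a := by
  rw [Finset.prod_Ico_eq_prod_range, Finset.prod_Ico_eq_prod_range,
    show n + 1 - (c+1) = n - c by omega]
  apply Finset.prod_congr rfl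
  intro t _
  rw [show c + t + 1 = c + 1 + t by omega]

lemma frac_cancel {a b d : K} (ha : a ≠ 0) : (a / b) * (d / a) = d / b := by
  rw [div_mul_div_comm, mul_comm a d, mul_div_mul_right _ _ ha]

lemma vandermonde_ratio (q n c M : ℕ) (hq : 2 ≤ q) (hc : c ≤ n) (hM : n < M) (μ : ℕ → ℕ)
    (hμ1 : ∀ j, j < c → μ j = j) (hμ2 : ∀ j, c ≤ j → j < n → μ j = j + 1) (hμ3 : μ n = M) :
    ∏ j ∈ Finset.range (n+1), ∏ i ∈ Finset.range j,
        ((xp q (μ j) - xp q (μ i)) / (xp q j - xp q i))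
      = (∏ i ∈ Finset.range c, ((xp q M - xp q i) / (xp q c - xp q i)))
        * ∏ a ∈ Finset.Ico (c+1) (n+1), ((xp q M - xp q a) / (xp q a - xp q c)) := by
  -- outer split
  rw [Finset.prod_range_succ]
  rw [← Finset.prod_range_mul_prod_Ico _ hc]
  -- A = 1
  have hA : ∏ j ∈ Finset.range c, ∏ i ∈ Finset.range j,
      ((xp q (μ j) - xp q (μ i)) / (xp q j - xp q i)) = 1 := by
    apply Finset.prod_eq_one
    intro j hj
    rw [Finset.mem_range] at hj
    apply Finset.prod_eq_one
    intro i hi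
    rw [Finset.mem_range] at hi
    rw [hμ1 j hj, hμ1 i (by omega)]
    exact div_self (xp_sub_ne hq (by omega))
  rw [hA, one_mul]
  -- F n  =  C1 * C2
  have hFn : ∏ i ∈ Finset.range n, ((xp q (μ n) - xp q (μ i)) / (xp q n - xp q i))
      = (∏ i ∈ Finset.range c, ((xp q M - xp q i) / (xp q n - xp q i)))
        * ∏ i ∈ Finset.Ico c n, ((xp q M - xp q (i+1)) / (xp q n - xp q i)) := by
    rw [← Finset.prod_range_mul_prod_Ico _ hc, hμ3]
    congr 1
    · apply Finset.prod_congr rfl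
      intro i hi
      rw [Finset.mem_range] at hi
      rw [hμ1 i hi]
    · apply Finset.prod_congr rfl
      intro i hi
      rw [Finset.mem_Ico] at hi
      rw [hμ2 i hi.1 hi.2]
  rw [hFn]
  -- B = BG1 * BG2
  have hB : ∏ j ∈ Finset.Ico c n, ∏ i ∈ Finset.range j,
      ((xp q (μ j) - xp q (μ i)) / (xp q j - xp q i))
      = (∏ j ∈ Finset.Ico c n, ∏ i ∈ Finset.range c,
          ((xp q (j+1) - xp q i) / (xp q j - xp q i)))
        * ∏ j ∈ Finset.Ico c n, ∏ i ∈ Finset.Ico c j,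
            ((xp q (j+1) - xp q (i+1)) / (xp q j - xp q i)) := by
    rw [← Finset.prod_mul_distrib]
    apply Finset.prod_congr rfl
    intro j hj
    rw [Finset.mem_Ico] at hj
    rw [← Finset.prod_range_mul_prod_Ico _ hj.1]
    congr 1
    · apply Finset.prod_congr rfl
      intro i hi
      rw [Finset.mem_range] at hi
      rw [hμ1 i hi, hμ2 j hj.1 hj.2]
    · apply Finset.prod_congr rfl
      intro i hi
      rw [Finset.mem_Ico] at hi
      rw [hμ2 i hi.1 (by omega), hμ2 j hj.1 hj.2]
  rw [hB]
  -- BG1 via telescoping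
  have hBG1 : ∏ j ∈ Finset.Ico c n, ∏ i ∈ Finset.range c,
      ((xp q (j+1) - xp q i) / (xp q j - xp q i))
      = ∏ i ∈ Finset.range c, ((xp q n - xp q i) / (xp q c - xp q i)) := by
    rw [Finset.prod_comm]
    apply Finset.prod_congr rfl
    intro i hi
    rw [Finset.mem_range] at hi
    exact telescope (fun j => xp q j - xp q i) c n hc
      (fun j h1 h2 => xp_sub_ne hq (by omega))
  rw [hBG1]
  rcases Nat.eq_or_lt_of_le hc with rfl | hcn
  · -- degenerate case c = n
    simp only [Finset.Ico_self, Finset.prod_empty, mul_one]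
    have h1 : ∏ i ∈ Finset.range c, ((xp q c - xp q i) / (xp q c - xp q i)) = 1 :=
      Finset.prod_eq_one fun i hi => div_self (xp_sub_ne hq
        (by rw [Finset.mem_range] at hi; omega))
    rw [h1, one_mul]
  -- main case c < n
  -- BG2 = P1 / P2
  set P1 := ∏ i ∈ Finset.Ico (c+1) n, (xp q n - xp q i) with hP1
  set P2 := ∏ j ∈ Finset.Ico (c+1) n, (xp q j - xp q c) with hP2
  have hP1ne : P1 ≠ 0 := by
    rw [hP1]
    apply Finset.prod_ne_zero_iff.mpr
    intro i hi
    rw [Finset.mem_Ico] at hi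
    exact xp_sub_ne hq (by omega)
  have hP2ne : P2 ≠ 0 := by
    rw [hP2]
    apply Finset.prod_ne_zero_iff.mpr
    intro i hi
    rw [Finset.mem_Ico] at hi
    exact xp_sub_ne hq (by omega)
  have hBG2 : ∏ j ∈ Finset.Ico c n, ∏ i ∈ Finset.Ico c j,
      ((xp q (j+1) - xp q (i+1)) / (xp q j - xp q i)) = P1 / P2 := by
    have hnum : ∏ j ∈ Finset.Ico c n, ∏ i ∈ Finset.Ico c j, (xp q (j+1) - xp q (i+1))
        = Wd q (c+1) (n+1) :=
      shift_reindex (fun j i => xp q j - xp q i) c n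
    have hsplit : ∏ j ∈ Finset.Ico c n, ∏ i ∈ Finset.Ico c j,
        ((xp q (j+1) - xp q (i+1)) / (xp q j - xp q i))
        = (∏ j ∈ Finset.Ico c n, ∏ i ∈ Finset.Ico c j, (xp q (j+1) - xp q (i+1)))
          / Wd q c n := by
      rw [Wd, ← Finset.prod_div_distrib]
      apply Finset.prod_congr rfl
      intro j _
      rw [← Finset.prod_div_distrib]
    rw [hsplit, hnum, Wd_succ_top (by omega : c + 1 ≤ n), Wd_bot (by omega : c ≤ n)]
    rw [← hP1, ← hP2]
    rw [mul_comm (Wd q (c+1) n) P1, mul_comm (Wd q (c+1) n) P2,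
      mul_div_mul_right _ _ (Wd_ne_zero hq (c+1) n)]
  rw [hBG2]
  -- C2 pieces
  set Q1 := ∏ a ∈ Finset.Ico (c+1) (n+1), (xp q M - xp q a) with hQ1
  have hC2 : ∏ i ∈ Finset.Ico c n, ((xp q M - xp q (i+1)) / (xp q n - xp q i))
      = Q1 / ((xp q n - xp q c) * P1) := by
    rw [Finset.prod_div_distrib, shift1 (fun a => xp q M - xp q a) c n, ← hQ1]
    congr 1
    rw [Finset.prod_eq_prod_Ico_succ_bot hcn, ← hP1]
  rw [hC2]
  -- T2
  have hT2 : ∏ a ∈ Finset.Ico (c+1) (n+1), ((xp q M - xp q a) / (xp q a - xp q c))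
      = Q1 / (P2 * (xp q n - xp q c)) := by
    rw [Finset.prod_div_distrib, ← hQ1]
    congr 1
    rw [Finset.prod_Ico_succ_top (by omega : c + 1 ≤ n), ← hP2]
  rw [hT2]
  -- final algebra
  have hnc : xp q n - xp q c ≠ 0 := xp_sub_ne hq (by omega)
  have hprod : (∏ i ∈ Finset.range c, ((xp q n - xp q i) / (xp q c - xp q i)))
      * (∏ i ∈ Finset.range c, ((xp q M - xp q i) / (xp q n - xp q i)))
      = ∏ i ∈ Finset.range c, ((xp q M - xp q i) / (xp q c - xp q i)) := by
    rw [← Finset.prod_mul_distrib]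
    apply Finset.prod_congr rfl
    intro i hi
    rw [Finset.mem_range] at hi
    exact frac_cancel (xp_sub_ne hq (by omega))
  rw [← hprod]
  have key : ∀ A1 A2 : K, A1 * (P1 / P2) * (A2 * (Q1 / ((xp q n - xp q c) * P1)))
      = A1 * A2 * (Q1 / (P2 * (xp q n - xp q c))) := by
    intro A1 A2
    field_simp
  exact key _ _



lemma ribbon_closed (q k m : ℕ) (hq : 2 ≤ q) (hm : 0 < m) {s : K} (hs : Good s) :
    ribbonQT q (k+m) (hookComp k m hm) s
      = ∏ b ∈ Finset.Ico 1 (k+1),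
          (s ^ (q ^ b - 1) * (1 - s ^ (q ^ (k+m) - q ^ b)) / (1 - s ^ (q ^ b - 1))) := by
  rw [ribbon_eq_Hs q k m hq hm hs,
    Hs_closed hq hs (show k < k + m by omega) 0 (Nat.zero_le k), pow_zero,
    div_self (hs.one_sub_ne (pow_pos_sub_one hq (by omega))), one_mul]

lemma Sspec_eq (q m k n : ℕ) (hq : 2 ≤ q) (hk : k ≤ n) (hm : 0 < m) :
    Sspec q (n+1) (hookLam m k) RatFunc.X
      = (∏ i ∈ Finset.range (n-k), ((xp q (m+n) - xp q i) / (xp q (n-k) - xp q i)))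
        * ∏ a ∈ Finset.Ico (n-k+1) (n+1), ((xp q (m+n) - xp q a) / (xp q a - xp q (n-k))) := by
  have h := vandermonde_ratio q n (n-k) (m+n) hq (by omega) (by omega)
    (fun j => hookLam m k (n+1-j) + j)
    (fun j hj => by beta_reduce; unfold hookLam; split_ifs <;> omega)
    (fun j h1 h2 => by beta_reduce; unfold hookLam; split_ifs <;> omega)
    (by beta_reduce; unfold hookLam; split_ifs <;> omega)
  rw [← h]
  simp only [Sspec, xp]

lemma qtbin_eq_T1 (q m k n : ℕ) (hq : 2 ≤ q) (hk : k ≤ n) (hm : 0 < m) :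
    qtbin q (m+n) (n-k) RatFunc.X
      = ∏ i ∈ Finset.range (n-k), ((xp q (m+n) - xp q i) / (xp q (n-k) - xp q i)) := by
  rw [qtbin]
  apply Finset.prod_congr rfl
  intro i hi
  rw [Finset.mem_range] at hi
  rw [eq_comm, div_eq_div_iff (xp_sub_ne hq (by omega))
    (goodX.one_sub_ne (pow_pos_sub hq (by omega : i < n - k)))]
  unfold xp
  have h1 : (RatFunc.X:K) ^ q ^ (n-k) = RatFunc.X ^ q ^ i * RatFunc.X ^ (q ^ (n-k) - q ^ i) := by
    rw [← pow_add]
    congr 1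
    have := Nat.pow_le_pow_right (show 1 ≤ q by omega) (show i ≤ n - k by omega)
    omega
  have h2 : (RatFunc.X:K) ^ q ^ (m+n) = RatFunc.X ^ q ^ i * RatFunc.X ^ (q ^ (m+n) - q ^ i) := by
    rw [← pow_add]
    congr 1
    have := Nat.pow_le_pow_right (show 1 ≤ q by omega) (show i ≤ m + n by omega)
    omega
  rw [h1, h2]
  ring

lemma hook_factor (q : ℕ) (hq : 2 ≤ q) {s : K} (hs : Good s) {b B : ℕ} (hb : 1 ≤ b)
    (hbB : b < B) :
    (s ^ (q ^ B) - s ^ (q ^ b)) / (s ^ (q ^ b) - s)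
      = s ^ (q ^ b - 1) * (1 - s ^ (q ^ B - q ^ b)) / (1 - s ^ (q ^ b - 1)) := by
  have hd1 : s ^ (q ^ b) - s ≠ 0 := by
    have := hs.sub_ne (a := q ^ b) (b := 1) (Nat.one_lt_pow (by omega) (by omega))
    intro hc
    apply this
    rw [pow_one]
    linear_combination -hc
  have hd2 : (1:K) - s ^ (q ^ b - 1) ≠ 0 := hs.one_sub_ne (pow_pos_sub_one hq (by omega))
  rw [div_eq_div_iff hd1 hd2]
  have hq1 : 1 ≤ q ^ b := Nat.one_le_pow _ _ (by omega)
  have hqb : q ^ b ≤ q ^ B := Nat.pow_le_pow_right (by omega) (by omega)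
  have e1 : s ^ (q ^ b - 1) * s = s ^ (q ^ b) := by
    rw [← pow_succ]
    congr 1
    omega
  have e2 : s ^ (q ^ b - 1) * s ^ (q ^ B - q ^ b) * s = s ^ (q ^ B) := by
    rw [← pow_add, ← pow_succ]
    congr 1
    omega
  rw [← e2, ← e1]
  ring

lemma T2_eq_ribbon (q m k n : ℕ) (hq : 2 ≤ q) (hk : k ≤ n) (hm : 0 < m) :
    ∏ a ∈ Finset.Ico (n-k+1) (n+1), ((xp q (m+n) - xp q a) / (xp q a - xp q (n-k)))
      = ribbonQT q (k + m) (hookComp k m hm) (RatFunc.X ^ q ^ (n - k)) := by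
  set s : K := RatFunc.X ^ q ^ (n-k) with hsdef
  have hs : Good s := good_X_pow _ (pow_pos (by omega : 0 < q) _)
  rw [ribbon_closed q k m hq hm hs]
  rw [Finset.prod_Ico_eq_prod_range, Finset.prod_Ico_eq_prod_range,
    show n + 1 - (n - k + 1) = k by omega, show k + 1 - 1 = k by omega]
  apply Finset.prod_congr rfl
  intro t ht
  rw [Finset.mem_range] at ht
  have hxps : ∀ e : ℕ, xp q (n - k + e) = s ^ (q ^ e) := by
    intro e
    rw [hsdef, xp, ← pow_mul, ← pow_add]
  have hx1 : xp q (m+n) = s ^ (q ^ (k+m)) := by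
    rw [show m + n = n - k + (k + m) by omega, hxps]
  have hx2 : xp q (n - k + 1 + t) = s ^ (q ^ (1 + t)) := by
    rw [show n - k + 1 + t = n - k + (1 + t) by omega, hxps]
  have hx3 : xp q (n - k) = s := by
    have := hxps 0
    rw [Nat.add_zero, pow_zero, pow_one] at this
    exact this
  rw [hx1, hx2, hx3]
  exact hook_factor q hq hs (by omega) (by omega)


/-- For the hook `λ = (m,1^k)` and reverse hook `α = (1^k,m)`:
`S_{(m,1^k)}(1,…,t^k) = r_{(1^k,m)}(q,t)`, and more generally, for `n ≥ k`,
`S_{(m,1^k)}(1,…,t^n) = [m+n choose n-k]_{q,t} · r_{(1^k,m)}(q, t^{q^{n-k}})`. -/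
theorem hook_ribbon_coincidence (q m k n : ℕ) (hq : 2 ≤ q) (hm : 0 < m) (hk : k ≤ n) :
    Sspec q (k + 1) (hookLam m k) RatFunc.X
        = ribbonQT q (k + m) (hookComp k m hm) RatFunc.X ∧
      Sspec q (n + 1) (hookLam m k) RatFunc.X
        = qtbin q (m + n) (n - k) RatFunc.X *
            ribbonQT q (k + m) (hookComp k m hm) (RatFunc.X ^ q ^ (n - k)) := by
  have main : ∀ n' : ℕ, k ≤ n' → Sspec q (n' + 1) (hookLam m k) RatFunc.X
      = qtbin q (m + n') (n' - k) RatFunc.X *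
          ribbonQT q (k + m) (hookComp k m hm) (RatFunc.X ^ q ^ (n' - k)) := by
    intro n' hk'
    rw [Sspec_eq q m k n' hq hk' hm, qtbin_eq_T1 q m k n' hq hk' hm,
      T2_eq_ribbon q m k n' hq hk' hm]
  constructor
  · have h := main k le_rfl
    rw [Nat.sub_self, pow_zero, pow_one] at h
    rw [h, qtbin, Finset.range_zero, Finset.prod_empty, one_mul]
  · exact main n hk
end
end
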